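/- Let (F, τ) be a difference field of characteristic zero with field of constants k = F^τ. The following are equivalent: (1) for every n ≥ 1, all p_0, …, p_n ∈ F with p_0 ≠ 0 and p_n ≠ 0, and every f ∈ F, there exists a nonzero y ∈ F with Σ_{i=0}^n p_i τ^i(y) = f; (2) for every n ≥ 1 and all p_0, …, p_n ∈ F with p_0 ≠ 0 and p_n ≠ 0, the set { y ∈ F : Σ_{i=0}^n p_i τ^i(y) = 0 } is a k-vector subspace of F of dimension exactly n. -/

import Mathlib

set_option maxHeartbeats 1000000
set_option synthInstance.maxHeartbeats 400000

open Polynomial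
open Finset

noncomputable section

variable {F : Type*} [Field F]

/-- The fixed subfield `k = F^τ` of a difference field `(F, τ)`. -/
def kfix (τ : F →+* F) : Subfield F := RingHom.eqLocusField τ (RingHom.id F)

variable (τ : F →+* F)


lemma iter_mul (a b : F) (i : ℕ) : τ^[i] (a*b) = τ^[i] a * τ^[i] b := by
  induction i with
  | zero => simp
  | succ n ih => simp [Function.iterate_succ_apply', ih]

lemma iter_fixed (c : kfix τ) (i : ℕ) : τ^[i] (c : F) = c := by
  induction i with
  | zero => simp
  | succ n ih => rw [Function.iterate_succ_apply', ih]; exact c.2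

/-- The difference operator y ↦ Σ_{i≤n} P i τ^i y as a k-linear map. -/
def Lmap (P : ℕ → F) (n : ℕ) : F →ₗ[kfix τ] F where
  toFun y := ∑ i ∈ Finset.range (n+1), P i * τ^[i] y
  map_add' x y := by
    simp only [map_add, iterate_map_add, mul_add, Finset.sum_add_distrib]
  map_smul' c y := by
    simp only [RingHom.id_apply]
    rw [Finset.smul_sum]
    refine Finset.sum_congr rfl fun i _ => ?_
    have : (c : F) * y = c • y := rfl
    rw [← this, iter_mul, iter_fixed]
    rw [Subfield.smul_def, smul_eq_mul]
    ring

lemma Lmap_apply (P : ℕ → F) (n : ℕ) (y : F) :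
    Lmap τ P n y = ∑ i ∈ Finset.range (n+1), P i * τ^[i] y := rfl


section Cas
variable {P : ℕ → F} {n m : ℕ} {y : Fin m → F}

/-- relation predicate -/
def TRel (τ : F →+* F) (y : Fin m → F) (g : Fin m → F) (n : ℕ) : Prop :=
  ∀ i < n, ∑ j, g j * τ^[i] (y j) = 0

lemma shift_hi {g : Fin m → F} (hg : TRel τ y g n) :
    ∀ i, 1 ≤ i → i ≤ n → ∑ j, τ (g j) * τ^[i] (y j) = 0 := by
  intro i h1 h2
  obtain ⟨i, rfl⟩ : ∃ i', i = i' + 1 := ⟨i - 1, (Nat.succ_pred_eq_of_pos h1).symm⟩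
  have h3 := congrArg τ (hg i (by omega))
  rw [map_sum, map_zero] at h3
  rw [← h3]
  refine Finset.sum_congr rfl fun j _ => ?_
  rw [map_mul, ← Function.iterate_succ_apply' τ]

variable (hy : ∀ j, ∑ i ∈ Finset.range (n+1), P i * τ^[i] (y j) = 0)

include hy in
lemma shift (h0 : P 0 ≠ 0) {g : Fin m → F} (hg : TRel τ y g n) :
    TRel τ y (fun j => τ (g j)) n := by
  intro i hi
  rcases Nat.eq_zero_or_pos i with rfl | hpos
  · have key : ∀ j, P 0 * y j = -∑ i ∈ Finset.Ico 1 (n+1), P i * τ^[i] (y j) := by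
      intro j
      have h := hy j
      rw [Finset.range_eq_Ico, Finset.sum_eq_sum_Ico_succ_bot (by omega : 0 < n+1)] at h
      simp only [Function.iterate_zero, id_eq, zero_add] at h
      linear_combination h
    have hmain : P 0 * ∑ j, τ (g j) * (y j) = 0 := by
      rw [Finset.mul_sum]
      calc ∑ j, P 0 * (τ (g j) * y j)
          = ∑ j : Fin m, τ (g j) * (P 0 * y j) := by
            refine Finset.sum_congr rfl fun j _ => by ring
        _ = ∑ j : Fin m, ∑ i ∈ Finset.Ico 1 (n+1), -(P i * (τ (g j) * τ^[i] (y j))) := by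
            refine Finset.sum_congr rfl fun j _ => ?_
            rw [key j, mul_neg, Finset.mul_sum, Finset.sum_neg_distrib]
            exact neg_inj.mpr (Finset.sum_congr rfl fun i _ => by ring)
        _ = ∑ i ∈ Finset.Ico 1 (n+1), ∑ j : Fin m, -(P i * (τ (g j) * τ^[i] (y j))) :=
            Finset.sum_comm
        _ = 0 := by
            refine Finset.sum_eq_zero fun i hi => ?_
            simp only [Finset.mem_Ico] at hi
            have h5 := shift_hi τ hg i hi.1 (by omega)
            rw [Finset.sum_neg_distrib, neg_eq_zero, ← Finset.mul_sum, h5, mul_zero]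
    simpa using (mul_eq_zero.mp hmain).resolve_left h0
  · simpa using shift_hi τ hg i hpos (le_of_lt hi)
end Cas

section Cas2
variable {P : ℕ → F} {n m : ℕ} {y : Fin m → F}
variable (hy : ∀ j, ∑ i ∈ Finset.range (n+1), P i * τ^[i] (y j) = 0)

include hy in
lemma rel_zero (hn : 1 ≤ n) (h0 : P 0 ≠ 0) (hind : LinearIndependent (kfix τ) y) :
    ∀ g : Fin m → F, TRel τ y g n → ∀ j, g j = 0 := by
  classical
  by_contra hcon
  push_neg at hcon
  obtain ⟨g0, hg0, j0', hj0'⟩ := hcon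
  set Q : ℕ → Prop := fun d => ∃ g : Fin m → F, TRel τ y g n ∧ (∃ j, g j ≠ 0) ∧
      (Finset.univ.filter (fun j => g j ≠ 0)).card = d with hQ
  have hQex : ∃ d, Q d := ⟨_, g0, hg0, ⟨j0', hj0'⟩, rfl⟩
  obtain ⟨g, hrel, ⟨j0, hj0⟩, hcard⟩ := Nat.find_spec hQex
  set d0 := Nat.find hQex with hd0
  set g' : Fin m → F := fun j => g j / g j0 with hg'
  have hrel' : TRel τ y g' n := by
    intro i hi
    have h := hrel i hi
    simp only [hg', div_mul_eq_mul_div]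
    rw [← Finset.sum_div, h, zero_div]
  have hg'j0 : g' j0 = 1 := div_self hj0
  set h'' : Fin m → F := fun j => τ (g' j) - g' j with hh
  have hrel'' : TRel τ y h'' n := by
    intro i hi
    have h1 := shift τ hy h0 hrel' i hi
    have h2 := hrel' i hi
    simp only [hh, sub_mul]
    rw [Finset.sum_sub_distrib, h1, h2, sub_zero]
  have hzero : ∀ j, h'' j = 0 := by
    by_contra hcc
    push_neg at hcc
    obtain ⟨j1, hj1⟩ := hcc
    have hsub : (Finset.univ.filter (fun j => h'' j ≠ 0)) ⊆
        (Finset.univ.filter (fun j => g j ≠ 0)).erase j0 := by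
      intro j hj
      simp only [Finset.mem_filter, Finset.mem_univ, true_and] at hj
      rw [Finset.mem_erase]
      refine ⟨?_, ?_⟩
      · rintro rfl
        apply hj
        rw [hh]
        simp only [hg'j0, map_one, sub_self]
      · simp only [Finset.mem_filter, Finset.mem_univ, true_and]
        intro hgj
        apply hj
        have : g' j = 0 := by show g j / g j0 = 0; rw [hgj, zero_div]
        rw [hh]
        simp [this]
    have hj0mem : j0 ∈ Finset.univ.filter (fun j => g j ≠ 0) := by
      simp [hj0]
    have hlt : (Finset.univ.filter (fun j => h'' j ≠ 0)).card < d0 := by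
      calc (Finset.univ.filter (fun j => h'' j ≠ 0)).card
          ≤ ((Finset.univ.filter (fun j => g j ≠ 0)).erase j0).card :=
            Finset.card_le_card hsub
        _ < (Finset.univ.filter (fun j => g j ≠ 0)).card :=
            Finset.card_erase_lt_of_mem hj0mem
        _ = d0 := hcard
    exact Nat.find_min hQex hlt ⟨h'', hrel'', ⟨j1, hj1⟩, rfl⟩
  have hk : ∀ j, g' j ∈ kfix τ := by
    intro j
    have h := hzero j
    rw [hh] at h
    have : τ (g' j) = g' j := by linear_combination h
    exact this
  set c : Fin m → kfix τ := fun j => ⟨g' j, hk j⟩ with hc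
  have hcsum : ∑ j, c j • y j = 0 := by
    have h := hrel' 0 (by omega)
    simp only [Function.iterate_zero, id_eq] at h
    rw [← h]
    exact Finset.sum_congr rfl fun j _ => rfl
  have hcz := Fintype.linearIndependent_iff.mp hind c hcsum j0
  have : g' j0 = 0 := congrArg Subtype.val hcz
  rw [hg'j0] at this
  exact one_ne_zero this

include hy in
lemma card_le (hn : 1 ≤ n) (h0 : P 0 ≠ 0)
    (hind : LinearIndependent (kfix τ) y) : m ≤ n := by
  have hli : LinearIndependent F (fun j => fun i : Fin n => τ^[(i:ℕ)] (y j)) := by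
    rw [Fintype.linearIndependent_iff]
    intro g hg j
    refine rel_zero τ hy hn h0 hind g (fun i hi => ?_) j
    have h := congrFun hg ⟨i, hi⟩
    simpa using h
  have h := hli.fintype_card_le_finrank
  simpa using h
end Cas2

/-- auxiliary sequence for dividing `Σ P i τ^i` by `τ - a` on the right. -/
def useq (P : ℕ → F) (a : F) (n : ℕ) : ℕ → F
  | 0 => P n
  | (j+1) => P (n-(j+1)) + useq P a n j * τ^[n-(j+1)] a

/-- quotient coefficients -/
def Qcoef (P : ℕ → F) (a : F) (n : ℕ) (j : ℕ) : F := useq τ P a n (n-1-j)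

lemma Qcoef_top (P : ℕ → F) (a : F) (n : ℕ) (hn : 1 ≤ n) : Qcoef τ P a n (n-1) = P n := by
  have : n - 1 - (n-1) = 0 := by omega
  rw [Qcoef, this]; rfl

lemma Qcoef_rec (P : ℕ → F) (a : F) (n : ℕ) (i : ℕ) (h1 : 1 ≤ i) (h2 : i ≤ n - 1) :
    Qcoef τ P a n (i-1) = P i + Qcoef τ P a n i * τ^[i] a := by
  have e1 : n - 1 - (i-1) = (n - 1 - i) + 1 := by omega
  rw [Qcoef, Qcoef, e1]
  show P (n - (n-1-i+1)) + useq τ P a n (n-1-i) * τ^[n - (n-1-i+1)] a = _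
  have e2 : n - (n-1-i+1) = i := by omega
  rw [e2]

lemma factor_identity (P : ℕ → F) (a : F) (n : ℕ) (hn : 1 ≤ n) (y : F) :
    ∑ i ∈ Finset.range (n+1), P i * τ^[i] y
      = ∑ j ∈ Finset.range n, Qcoef τ P a n j * τ^[j] (τ y - a * y)
        + (P 0 + Qcoef τ P a n 0 * a) * y := by
  obtain ⟨m, rfl⟩ : ∃ m, n = m + 1 := ⟨n - 1, by omega⟩
  have hD : ∀ j : ℕ, τ^[j] (τ y - a * y) = τ^[j+1] y - τ^[j] a * τ^[j] y := by
    intro j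
    rw [iterate_map_sub, ← Function.iterate_succ_apply]
    congr 1
    induction j with
    | zero => simp
    | succ i ih => simp [Function.iterate_succ_apply', ih]
  -- rewrite RHS
  have hRHS : ∑ j ∈ Finset.range (m+1), Qcoef τ P a (m+1) j * τ^[j] (τ y - a * y)
        + (P 0 + Qcoef τ P a (m+1) 0 * a) * y
      = (∑ j ∈ Finset.range m,
          (Qcoef τ P a (m+1) j - Qcoef τ P a (m+1) (j+1) * τ^[j+1] a) * τ^[j+1] y)
        + P (m+1) * τ^[m+1] y + P 0 * y := by
    simp_rw [hD, mul_sub]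
    rw [Finset.sum_sub_distrib]
    rw [Finset.sum_range_succ (fun j => Qcoef τ P a (m+1) j * τ^[j+1] y) m]
    rw [Finset.sum_range_succ' (fun j => Qcoef τ P a (m+1) j * (τ^[j] a * τ^[j] y)) m]
    have htop : Qcoef τ P a (m+1) m = P (m+1) := by
      have h := Qcoef_top τ P a (m+1) (by omega)
      simpa using h
    rw [htop]
    simp only [Function.iterate_zero, id_eq]
    have : ∀ j ∈ Finset.range m,
        (Qcoef τ P a (m+1) j - Qcoef τ P a (m+1) (j+1) * τ^[j+1] a) * τ^[j+1] y
        = Qcoef τ P a (m+1) j * τ^[j+1] y - Qcoef τ P a (m+1) (j+1) * (τ^[j+1] a * τ^[j+1] y) := by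
      intro j _; ring
    rw [Finset.sum_congr rfl this, Finset.sum_sub_distrib]
    ring
  rw [hRHS]
  -- rewrite LHS
  rw [Finset.sum_range_succ' (fun i => P i * τ^[i] y) (m+1)]
  rw [Finset.sum_range_succ (fun i => P (i+1) * τ^[i+1] y) m]
  simp only [Function.iterate_zero, id_eq]
  congr 1
  congr 1
  refine Finset.sum_congr rfl fun j hj => ?_
  rw [Finset.mem_range] at hj
  have := Qcoef_rec τ P a (m+1) (j+1) (by omega) (by omega)
  have hj1 : j + 1 - 1 = j := by omega
  rw [hj1] at this
  rw [this]
  ring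

section Lower

/-- statement (1) in ℕ-indexed form -/
def Hyp1 (τ : F →+* F) : Prop :=
  ∀ n : ℕ, 1 ≤ n → ∀ P : ℕ → F, P 0 ≠ 0 → P n ≠ 0 → ∀ f : F,
    ∃ y : F, y ≠ 0 ∧ ∑ i ∈ Finset.range (n+1), P i * τ^[i] y = f

lemma tau_ne_zero (x : F) (hx : x ≠ 0) : τ x ≠ 0 := by
  intro h
  exact hx (τ.injective (by rw [h, map_zero]))

lemma lower (h1 : Hyp1 τ) : ∀ n : ℕ, 1 ≤ n → ∀ P : ℕ → F, P 0 ≠ 0 → P n ≠ 0 →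
    ∃ y : Fin n → F, (∀ j, ∑ i ∈ Finset.range (n+1), P i * τ^[i] (y j) = 0) ∧
      LinearIndependent (kfix τ) y := by
  intro n
  induction n with
  | zero => omega
  | succ m IH =>
    intro _ P h0 htop
    -- a nonzero solution of the homogeneous equation
    obtain ⟨y1, hy1ne, hy1⟩ := h1 (m+1) (by omega) P h0 htop 0
    set a : F := τ y1 / y1 with ha
    have hane : a ≠ 0 := div_ne_zero (tau_ne_zero τ y1 hy1ne) hy1ne
    have hDy1 : τ y1 - a * y1 = 0 := by
      rw [ha]; field_simp; ring
    rcases Nat.eq_zero_or_pos m with rfl | hm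
    · -- base case n = 1
      refine ⟨fun _ => y1, fun j => hy1, ?_⟩
      rw [Fintype.linearIndependent_iff]
      intro g hg j
      rw [Fin.sum_univ_one] at hg
      have : g 0 • y1 = 0 := hg
      have : (g 0 : F) * y1 = 0 := this
      rcases mul_eq_zero.mp this with h | h
      · have : g 0 = 0 := Subtype.ext h
        rwa [Fin.fin_one_eq_zero j]
      · exact absurd h hy1ne
    · -- inductive step
      set Qc : ℕ → F := Qcoef τ P a (m+1) with hQc
      have hfac := factor_identity τ P a (m+1) (by omega)
      -- remainder vanishes
      have hrem : P 0 + Qc 0 * a = 0 := by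
        have h := hfac y1
        rw [hy1] at h
        have hz : ∀ j ∈ Finset.range (m+1), Qc j * τ^[j] (τ y1 - a * y1) = 0 := by
          intro j _
          rw [hDy1, iterate_map_zero, mul_zero]
        rw [Finset.sum_eq_zero hz, zero_add] at h
        rcases mul_eq_zero.mp h.symm with h | h
        · exact h
        · exact absurd h hy1ne
      have hQ0 : Qc 0 ≠ 0 := by
        intro h
        rw [h, zero_mul, add_zero] at hrem
        exact h0 hrem
      have hQtop : Qc m ≠ 0 := by
        have h := Qcoef_top τ P a (m+1) (by omega)
        simp only [Nat.add_sub_cancel] at h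
        rw [hQc, h]
        exact htop
      -- independent solutions of the quotient operator
      obtain ⟨z, hzsol, hzind⟩ := IH hm Qc hQ0 hQtop
      -- solve first order equations D y = z j
      have hsolve : ∀ j : Fin m, ∃ w : F, τ w - a * w = z j := by
        intro j
        set Pd : ℕ → F := fun i => if i = 0 then -a else 1 with hPd
        obtain ⟨w, hwne, hw⟩ := h1 1 le_rfl Pd (by simp [hPd, hane]) (by simp [hPd]) (z j)
        refine ⟨w, ?_⟩
        rw [show (1:ℕ)+1 = 2 from rfl] at hw
        rw [Finset.sum_range_succ, Finset.sum_range_one] at hw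
        simp only [hPd, if_pos rfl, if_neg one_ne_zero, Function.iterate_zero, id_eq,
          Function.iterate_one, one_mul] at hw
        rw [← hw]; ring
      choose w hw using hsolve
      -- the Dmap as a linear map : coefficients of τ w - a w
      set Pd : ℕ → F := fun i => if i = 0 then -a else 1 with hPd
      have hDmap : ∀ x : F, Lmap τ Pd 1 x = τ x - a * x := by
        intro x
        rw [Lmap_apply]
        rw [show (1:ℕ)+1 = 2 from rfl, Finset.sum_range_succ, Finset.sum_range_one]
        simp only [hPd, if_pos rfl, if_neg one_ne_zero, Function.iterate_zero, id_eq,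
          Function.iterate_one, one_mul]
        ring
      refine ⟨Fin.cons y1 w, ?_, ?_⟩
      · intro j
        refine Fin.cases ?_ ?_ j
        · simpa using hy1
        · intro j'
          simp only [Fin.cons_succ]
          rw [hfac (w j')]
          have : ∀ i ∈ Finset.range (m+1), Qc i * τ^[i] (τ (w j') - a * w j') = Qc i * τ^[i] (z j') := by
            intro i _
            rw [hw j']
          rw [Finset.sum_congr rfl this, hzsol j']
          rw [hrem, zero_mul, add_zero]
      · rw [Fintype.linearIndependent_iff]
        intro g hg j
        -- apply D to the relation
        have happ : Lmap τ Pd 1 (∑ j : Fin (m+1), g j • (Fin.cons y1 w : Fin (m+1) → F) j) = 0 := by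
          rw [hg, map_zero]
        rw [map_sum] at happ
        simp_rw [LinearMap.map_smul] at happ
        rw [Fin.sum_univ_succ] at happ
        simp only [Fin.cons_zero, Fin.cons_succ] at happ
        rw [hDmap y1, hDy1, smul_zero, zero_add] at happ
        have happ2 : ∑ j : Fin m, g j.succ • z j = 0 := by
          rw [← happ]
          refine Finset.sum_congr rfl fun j' _ => ?_
          rw [hDmap (w j'), hw j']
        have hgsucc : ∀ j : Fin m, g j.succ = 0 :=
          Fintype.linearIndependent_iff.mp hzind (fun j => g j.succ) happ2
        -- now g 0 • y1 = 0
        have hg0 : g 0 • y1 = 0 := by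
          have := hg
          rw [Fin.sum_univ_succ] at this
          simp only [Fin.cons_zero, Fin.cons_succ] at this
          rw [Finset.sum_eq_zero (fun j' _ => by rw [hgsucc j', zero_smul]), add_zero] at this
          exact this
        have : (g 0 : F) * y1 = 0 := hg0
        refine Fin.cases ?_ ?_ j
        · rcases mul_eq_zero.mp this with h | h
          · exact Subtype.ext h
          · exact absurd h hy1ne
        · intro j'; exact hgsucc j'
end Lower

section Main

lemma finrank_ker (h1 : Hyp1 τ) (n : ℕ) (hn : 1 ≤ n) (P : ℕ → F) (h0 : P 0 ≠ 0)
    (htop : P n ≠ 0) :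
    Module.finrank (kfix τ) (LinearMap.ker (Lmap τ P n)) = n := by
  obtain ⟨y, hysol, hyind⟩ := lower τ h1 n hn P h0 htop
  have hymem : ∀ j, y j ∈ LinearMap.ker (Lmap τ P n) := fun j => by
    rw [LinearMap.mem_ker, Lmap_apply]; exact hysol j
  set K := LinearMap.ker (Lmap τ P n) with hK
  set yk : Fin n → K := fun j => ⟨y j, hymem j⟩ with hyk
  have hcomp : (K.subtype ∘ yk) = y := by funext j; rfl
  have hind' : LinearIndependent (kfix τ) yk := by
    apply LinearIndependent.of_comp K.subtype
    rw [hcomp]; exact hyind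
  have hspan : ∀ w : K, w ∈ Submodule.span (kfix τ) (Set.range yk) := by
    intro w
    have hwF : (w : F) ∈ Submodule.span (kfix τ) (Set.range y) := by
      by_contra hcon
      have hcons : LinearIndependent (kfix τ) (Fin.cons (w : F) y : Fin (n+1) → F) :=
        linearIndependent_fin_cons.mpr ⟨hyind, hcon⟩
      have hsol' : ∀ j : Fin (n+1),
          ∑ i ∈ Finset.range (n+1), P i * τ^[i] ((Fin.cons (w:F) y : Fin (n+1) → F) j) = 0 := by
        refine Fin.cases ?_ ?_
        · have hw2 : Lmap τ P n (w : F) = 0 := w.2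
          rw [Lmap_apply] at hw2
          simpa using hw2
        · intro j; simpa using hysol j
      exact absurd (card_le τ hsol' hn h0 hcons) (by omega)
    have hrange : Set.range y = K.subtype '' Set.range yk := by
      rw [← Set.range_comp, hcomp]
    rw [hrange, ← Submodule.map_span] at hwF
    obtain ⟨v, hv, hveq⟩ := Submodule.mem_map.mp hwF
    have : v = w := Subtype.ext hveq
    rwa [this] at hv
  have htopspan : ⊤ ≤ Submodule.span (kfix τ) (Set.range yk) := fun w _ => hspan w
  have b : Module.Basis (Fin n) (kfix τ) K := Module.Basis.mk hind' htopspan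
  rw [Module.finrank_eq_card_basis b, Fintype.card_fin]

end Main

/-- statement (2) in ℕ-indexed form -/
def Hyp2 (τ : F →+* F) : Prop :=
  ∀ n : ℕ, 1 ≤ n → ∀ P : ℕ → F, P 0 ≠ 0 → P n ≠ 0 →
    ∃ V : Submodule (kfix τ) F,
      (∀ y : F, y ∈ V ↔ ∑ i ∈ Finset.range (n+1), P i * τ^[i] y = 0) ∧
      Module.finrank (kfix τ) V = n

lemma back (h2 : Hyp2 τ) (n : ℕ) (hn : 1 ≤ n) (P : ℕ → F) (h0 : P 0 ≠ 0) (htop : P n ≠ 0)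
    (hhigh : ∀ i, n < i → P i = 0) (f : F) :
    ∃ y : F, y ≠ 0 ∧ ∑ i ∈ Finset.range (n+1), P i * τ^[i] y = f := by
  rcases eq_or_ne f 0 with rfl | hf
  · obtain ⟨V, hmem, hrank⟩ := h2 n hn P h0 htop
    have hne : V ≠ ⊥ := by
      intro h; rw [h, finrank_bot] at hrank; omega
    obtain ⟨y, hyV, hyne⟩ := (Submodule.ne_bot_iff V).mp hne
    exact ⟨y, hyne, (hmem y).mp hyV⟩
  · set g : F := τ f / f with hg
    have hgne : g ≠ 0 := div_ne_zero (tau_ne_zero τ f hf) hf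
    set Q : ℕ → F := fun i => (if i = 0 then 0 else τ (P (i-1))) - g * P i with hQ
    have hQ0 : Q 0 ≠ 0 := by
      have : Q 0 = -(g * P 0) := by rw [hQ]; simp
      rw [this, neg_ne_zero]
      exact mul_ne_zero hgne h0
    have hQtop : Q (n+1) ≠ 0 := by
      have : Q (n+1) = τ (P n) := by
        rw [hQ]; simp [hhigh (n+1) (by omega)]
      rw [this]
      exact tau_ne_zero τ _ htop
    have hiden : ∀ y : F, ∑ i ∈ Finset.range (n+2), Q i * τ^[i] y
        = τ (∑ i ∈ Finset.range (n+1), P i * τ^[i] y)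
          - g * ∑ i ∈ Finset.range (n+1), P i * τ^[i] y := by
      intro y
      have e1 : ∑ i ∈ Finset.range (n+2), Q i * τ^[i] y
          = ∑ i ∈ Finset.range (n+2), (if i = 0 then 0 else τ (P (i-1))) * τ^[i] y
            - ∑ i ∈ Finset.range (n+2), g * (P i * τ^[i] y) := by
        rw [← Finset.sum_sub_distrib]
        refine Finset.sum_congr rfl fun i _ => ?_
        rw [hQ]; ring
      rw [e1]
      congr 1
      · rw [Finset.sum_range_succ' _ (n+1)]
        simp only [Nat.succ_ne_zero, if_neg, if_pos rfl, zero_mul, add_zero,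
          Nat.add_sub_cancel, reduceIte]
        rw [map_sum]
        refine Finset.sum_congr rfl fun i _ => ?_
        rw [map_mul, Function.iterate_succ_apply' τ]
      · rw [← Finset.mul_sum, Finset.sum_range_succ _ (n+1), hhigh (n+1) (by omega)]
        rw [zero_mul, add_zero]
    obtain ⟨V, hVmem, hVrank⟩ := h2 (n+1) (by omega) Q hQ0 hQtop
    obtain ⟨W, hWmem, hWrank⟩ := h2 n hn P h0 htop
    have hWfin : FiniteDimensional (kfix τ) W := Module.finite_of_finrank_pos (by omega)
    have hex : ∃ y0, y0 ∈ V ∧ ∑ i ∈ Finset.range (n+1), P i * τ^[i] y0 ≠ 0 := by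
      by_contra hcon
      push_neg at hcon
      have hle : V ≤ W := fun x hx => (hWmem x).mpr (hcon x hx)
      have := Submodule.finrank_mono hle
      omega
    obtain ⟨y0, hy0V, hLy0⟩ := hex
    set L0 : F := ∑ i ∈ Finset.range (n+1), P i * τ^[i] y0 with hL0
    have hτL0 : τ L0 = g * L0 := by
      have hQy0 : ∑ i ∈ Finset.range (n+2), Q i * τ^[i] y0 = 0 := (hVmem y0).mp hy0V
      rw [hiden y0] at hQy0
      linear_combination hQy0
    have hfix : (L0 / f) ∈ kfix τ := by
      have hτf : τ f ≠ 0 := tau_ne_zero τ f hf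
      have : τ (L0 / f) = L0 / f := by
        rw [map_div₀, hτL0, hg]
        field_simp
      exact this
    set c : kfix τ := ⟨L0 / f, hfix⟩ with hc
    have hcne : c ≠ 0 := by
      intro h
      have : L0 / f = 0 := congrArg Subtype.val h
      exact hLy0 (by
        rcases div_eq_zero_iff.mp this with h' | h'
        · exact h'
        · exact absurd h' hf)
    have hcFne : (c : F) ≠ 0 := fun h => hcne (Subtype.ext h)
    have hcinv : ((c⁻¹ : kfix τ) : F) = (c : F)⁻¹ := by
      push_cast
      rfl
    have hy0ne : y0 ≠ 0 := by
      intro h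
      apply hLy0
      rw [hL0, h]
      refine Finset.sum_eq_zero fun i _ => ?_
      rw [iterate_map_zero, mul_zero]
    refine ⟨(c : F)⁻¹ * y0, mul_ne_zero (inv_ne_zero hcFne) hy0ne, ?_⟩
    have hsum : ∑ i ∈ Finset.range (n+1), P i * τ^[i] ((c:F)⁻¹ * y0)
        = (c:F)⁻¹ * L0 := by
      rw [hL0, Finset.mul_sum]
      refine Finset.sum_congr rfl fun i _ => ?_
      rw [iter_mul, ← hcinv, iter_fixed]
      ring
    rw [hsum]
    show (L0 / f)⁻¹ * L0 = f
    rw [inv_div]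
    field_simp


/-- `(F, τ)` is linearly `τ`-closed (every nontrivial inhomogeneous linear
`τ`-difference equation has a nonzero solution) iff every homogeneous equation
`Σ_{i=0}^n p_i τ^i(y) = 0` with `p_0 p_n ≠ 0` has solution set a `k`-subspace of `F` of
dimension exactly `n`. -/
theorem stmt_13 {F : Type*} [Field F] [CharZero F] (τ : F →+* F) :
    (∀ n : ℕ, 1 ≤ n → ∀ p : Fin (n + 1) → F, p 0 ≠ 0 → p (Fin.last n) ≠ 0 →
      ∀ f : F, ∃ y : F, y ≠ 0 ∧ ∑ i : Fin (n + 1), p i * τ^[(i : ℕ)] y = f) ↔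
    (∀ n : ℕ, 1 ≤ n → ∀ p : Fin (n + 1) → F, p 0 ≠ 0 → p (Fin.last n) ≠ 0 →
      ∃ V : Submodule (kfix τ) F,
        (∀ y : F, y ∈ V ↔ ∑ i : Fin (n + 1), p i * τ^[(i : ℕ)] y = 0) ∧
        Module.finrank (kfix τ) V = n) := by
  classical
  constructor
  · intro h1 n hn p h0 hlast
    set P : ℕ → F := fun i => if h : i ≤ n then p ⟨i, by omega⟩ else 0 with hP
    have hPval : ∀ i : Fin (n+1), P (i : ℕ) = p i := by
      intro i
      have hi : (i:ℕ) ≤ n := by omega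
      show (if h : (i:ℕ) ≤ n then p ⟨(i:ℕ), by omega⟩ else 0) = p i
      rw [dif_pos hi]
    have hP0 : P 0 ≠ 0 := by
      have : P ((0 : Fin (n+1)) : ℕ) = p 0 := hPval 0
      simpa using this ▸ h0
    have hPn : P n ≠ 0 := by
      have h := hPval (Fin.last n)
      rw [Fin.val_last] at h
      rw [h]; exact hlast
    have hsum : ∀ y : F, ∑ i : Fin (n+1), p i * τ^[(i:ℕ)] y
        = ∑ i ∈ Finset.range (n+1), P i * τ^[i] y := by
      intro y
      rw [← Fin.sum_univ_eq_sum_range (fun i => P i * τ^[i] y) (n+1)]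
      exact Finset.sum_congr rfl fun i _ => by rw [hPval]
    have h1' : Hyp1 τ := by
      intro m hm P' h0' htop' f
      obtain ⟨y, hyne, hy⟩ := h1 m hm (fun i : Fin (m+1) => P' i)
        (by simpa using h0') (by simpa using htop') f
      refine ⟨y, hyne, ?_⟩
      rw [← hy, Fin.sum_univ_eq_sum_range (fun i => P' i * τ^[i] y) (m+1)]
    refine ⟨LinearMap.ker (Lmap τ P n), fun y => ?_, finrank_ker τ h1' n hn P hP0 hPn⟩
    rw [LinearMap.mem_ker, Lmap_apply, hsum y]
  · intro h2 n hn p h0 hlast f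
    set P : ℕ → F := fun i => if h : i ≤ n then p ⟨i, by omega⟩ else 0 with hP
    have hPval : ∀ i : Fin (n+1), P (i : ℕ) = p i := by
      intro i
      have hi : (i:ℕ) ≤ n := by omega
      show (if h : (i:ℕ) ≤ n then p ⟨(i:ℕ), by omega⟩ else 0) = p i
      rw [dif_pos hi]
    have hP0 : P 0 ≠ 0 := by
      have : P ((0 : Fin (n+1)) : ℕ) = p 0 := hPval 0
      simpa using this ▸ h0
    have hPn : P n ≠ 0 := by
      have h := hPval (Fin.last n)
      rw [Fin.val_last] at h
      rw [h]; exact hlast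
    have hsum : ∀ y : F, ∑ i : Fin (n+1), p i * τ^[(i:ℕ)] y
        = ∑ i ∈ Finset.range (n+1), P i * τ^[i] y := by
      intro y
      rw [← Fin.sum_univ_eq_sum_range (fun i => P i * τ^[i] y) (n+1)]
      exact Finset.sum_congr rfl fun i _ => by rw [hPval]
    have h2' : Hyp2 τ := by
      intro m hm P' h0' htop'
      obtain ⟨V, hmem, hrank⟩ := h2 m hm (fun i : Fin (m+1) => P' i)
        (by simpa using h0') (by simpa using htop')
      refine ⟨V, fun y => ?_, hrank⟩
      rw [hmem y, Fin.sum_univ_eq_sum_range (fun i => P' i * τ^[i] y) (m+1)]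
    have hhigh : ∀ i, n < i → P i = 0 := by
      intro i hi
      show (if h : i ≤ n then p ⟨i, by omega⟩ else 0) = 0
      rw [dif_neg (by omega)]
    obtain ⟨y, hyne, hy⟩ := back τ h2' n hn P hP0 hPn hhigh f
    exact ⟨y, hyne, by rw [hsum y, hy]⟩
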